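/- In an N-horizon deterministic chain MDP where a reward of 1 is given only at the final transition and 0 elsewhere, one-step value iteration starting from Q₀ = 0 requires exactly N iterations for the value at the initial state to become positive, whereas the greedy multi-step operator with a policy set containing the optimal policy and maximal step N makes it positive in one iteration. -/

import Mathlib

open Finset Filter Topology

/-- Deterministic Bellman optimality operator for a deterministic MDP with transition f. -/
noncomputable def dbOpt {S A : Type*} [Fintype A] [Nonempty A]
    (f : S × A → S) (r : S × A → ℝ) (γ : ℝ) (Q : S × A → ℝ) : S × A → ℝ :=
  fun p => r p + γ * univ.sup' univ_nonempty fun a' => Q (f p, a')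

/-- Deterministic Bellman expectation operator for a deterministic policy π. -/
def dbExp {S A : Type*} (f : S × A → S) (r : S × A → ℝ) (γ : ℝ)
    (π : S → A) (Q : S × A → ℝ) : S × A → ℝ :=
  fun p => r p + γ * Q (f p, π (f p))

/-- Greedy Multi-Step operator for a deterministic MDP:
    Ĝ Q = max_{π ∈ Π̂} max_{1 ≤ n ≤ N} (B^π)^{n-1} B Q (componentwise). -/
noncomputable def dgOp {S A : Type*} [Fintype A] [Nonempty A]
    (f : S × A → S) (r : S × A → ℝ) (γ : ℝ)
    {ι : Type*} [Fintype ι] [Nonempty ι] (pol : ι → S → A)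
    (N : ℕ) (hN : 1 ≤ N) (Q : S × A → ℝ) : S × A → ℝ :=
  fun p => univ.sup' univ_nonempty fun i =>
    (Icc 1 N).sup' (nonempty_Icc.mpr hN) fun n =>
      ((dbExp f r γ (pol i))^[n - 1] (dbOpt f r γ Q)) p

lemma dbOpt_eq_dbExp {S : Type*} (f : S × Unit → S) (r : S × Unit → ℝ) (γ : ℝ) :
    dbOpt f r γ = dbExp f r γ (fun _ => ()) := by
  funext Q p
  simp [dbOpt, dbExp, Finset.univ_unique]

lemma key (N : ℕ) (hN : 1 ≤ N) (γ : ℝ) :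
    ∀ k (i : Fin (N+1)),
    ((dbExp (fun p : Fin (N+1) × Unit => (⟨min ((p.1:ℕ)+1) N, Nat.lt_succ_of_le (min_le_right _ _)⟩ : Fin (N+1)))
      (fun p => if ((p.1 : Fin (N+1)) :ℕ) = N - 1 then (1:ℝ) else 0) γ (fun _ => ()))^[k] 0) (i, ()) =
    if (i:ℕ) < N ∧ N ≤ i + k then γ^(N-1-(i:ℕ)) else 0 := by
  intro k
  induction k with
  | zero =>
    intro i; have hi := i.isLt
    simp only [Function.iterate_zero, id_eq, Pi.zero_apply]
    rw [if_neg (by omega)]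
  | succ k ih =>
    intro i
    have hi := i.isLt
    rw [Function.iterate_succ_apply']
    simp only [dbExp]
    rw [ih]
    simp only [Fin.val_mk]
    rcases lt_trichotomy (i:ℕ) (N-1) with h | h | h
    · have hmin : min ((i:ℕ)+1) N = (i:ℕ)+1 := by omega
      rw [hmin, if_neg (by omega)]
      split_ifs with h1 h2 <;> try (exfalso; omega)
      · rw [show N - 1 - (i:ℕ) = (N - 1 - ((i:ℕ)+1)) + 1 by omega, pow_succ]
        ring
      · ring
    · have hmin : min ((i:ℕ)+1) N = N := by omega
      rw [hmin, if_pos (by omega), if_neg (by omega),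
        show N - 1 - (i:ℕ) = 0 by omega, if_pos (by omega)]
      ring
    · have hiN : (i:ℕ) = N := by omega
      have hmin : min ((i:ℕ)+1) N = N := by omega
      rw [hmin, if_neg (by omega), if_neg (by omega), if_neg (by omega)]
      ring


/-- in an N-horizon deterministic chain MDP (states s₀ → s₁ → ⋯ → s_N,
    one action, reward 1 only on the final transition from s_{N-1}), one-step value
    iteration from Q₀ = 0 needs exactly N iterations to make the value at s₀ positive,
    while the greedy multi-step operator (policy set containing the optimal policy,
    maximal step N) makes it γ^{N-1} > 0 in a single iteration. -/
theorem chain_mdp_one_step_vs_greedy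
    (N : ℕ) (hN : 1 ≤ N) (γ : ℝ) (hγ0 : 0 < γ) (hγ1 : γ < 1) :
    let f : Fin (N + 1) × Unit → Fin (N + 1) :=
      fun p => ⟨min ((p.1 : ℕ) + 1) N, by omega⟩
    let r : Fin (N + 1) × Unit → ℝ :=
      fun p => if (p.1 : ℕ) = N - 1 then 1 else 0
    let s0 : Fin (N + 1) × Unit := (⟨0, by omega⟩, ())
    (∀ k < N, ((dbOpt f r γ)^[k] 0) s0 = 0) ∧
      0 < ((dbOpt f r γ)^[N] 0) s0 ∧
      dgOp f r γ (fun _ : Unit => fun _ => ()) N hN 0 s0 = γ ^ (N - 1) := by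
  intro f r s0
  have hB : dbOpt f r γ = dbExp f r γ (fun _ => ()) := dbOpt_eq_dbExp f r γ
  have hkey := key N hN γ
  refine ⟨?_, ?_, ?_⟩
  · intro k hk
    rw [hB]
    have := hkey k ⟨0, by omega⟩
    simp only [f, r, s0] at this ⊢
    rw [this, if_neg (by simp; omega)]
  · rw [hB]
    have := hkey N ⟨0, by omega⟩
    simp only [f, r, s0] at this ⊢
    rw [this, if_pos (by simp; omega)]
    exact pow_pos hγ0 _
  · have hval : ∀ n ∈ Icc 1 N,
        ((dbExp f r γ (fun _ => ()))^[n - 1] (dbOpt f r γ 0)) s0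
          = if N ≤ n then γ ^ (N - 1) else 0 := by
      intro n hn
      simp only [Finset.mem_Icc] at hn
      rw [hB, ← Function.iterate_succ_apply]
      rw [show (n-1).succ = n by omega]
      have := hkey n ⟨0, by omega⟩
      simp only [f, r, s0] at this ⊢
      rw [this]
      congr 1
      simp; omega
    simp only [dgOp]
    apply le_antisymm
    · apply Finset.sup'_le
      intro i _
      apply Finset.sup'_le
      intro n hn
      have h := hval n hn
      refine h.trans_le ?_
      split_ifs with h1
      · exact le_rfl
      · exact pow_nonneg hγ0.le _
    · have hmem : N ∈ Icc 1 N := by simp [hN]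
      calc γ ^ (N - 1)
          = ((dbExp f r γ ((fun _ : Unit => fun _ : Fin (N+1) => ()) ()))^[N - 1]
              (dbOpt f r γ 0)) s0 := by rw [hval N hmem, if_pos le_rfl]
        _ ≤ _ := by
            refine le_trans (Finset.le_sup'
              (fun n : ℕ => (((dbExp f r γ (fun _ => ()))^[n - 1] (dbOpt f r γ 0)) s0 : ℝ))
              hmem) ?_
            exact Finset.le_sup' (fun i : Unit => (Icc 1 N).sup' (nonempty_Icc.mpr hN)
              fun n : ℕ => (((dbExp f r γ (fun _ => ()))^[n - 1] (dbOpt f r γ 0)) s0 : ℝ))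
              (mem_univ ())
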